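/- Let τ : (0,1) → ℝ be the inverse of the diffeomorphism μ, and define ρ(z,x) = e^{zτ(x)}τ(x)/(e^{τ(x)}−1) for z ∈ [0,1] and x ∈ (0,1) (with ρ(z,1/2) = 1, the limiting value at τ(1/2) = 0). Then for every x ∈ (0,1): (i) ∫_0^1 ρ(z,x) dz = 1; (ii) ∫_0^1 z ρ(z,x) dz = x; and (iii) ∂_x log ρ(z,x) = τ'(x)(z−x) for every z ∈ [0,1]. -/

import Mathlib

open Set MeasureTheory

noncomputable section

/-- `μ(τ) = (Todd(τ) − 1)/τ = 1/(1 − e^{−τ}) − 1/τ` for `τ ≠ 0`, `μ(0) = 1/2`. -/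
def toddMu (t : ℝ) : ℝ :=
  if t = 0 then 1 / 2 else 1 / (1 - Real.exp (-t)) - 1 / t

/-- `ρ(z,x) = e^{zτ(x)} τ(x) / (e^{τ(x)} − 1)`, with the limiting value `1` when `τ(x) = 0`
(i.e. at `x = 1/2`). -/
def rhoFun (tau : ℝ → ℝ) (z x : ℝ) : ℝ :=
  if tau x = 0 then 1 else Real.exp (z * tau x) * tau x / (Real.exp (tau x) - 1)

def hAux (t : ℝ) : ℝ := ∫ s in (0:ℝ)..1, Real.exp (s * t)
def h1Aux (t : ℝ) : ℝ := ∫ s in (0:ℝ)..1, s * Real.exp (s * t)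
def h2Aux (t : ℝ) : ℝ := ∫ s in (0:ℝ)..1, s ^ 2 * Real.exp (s * t)

lemma hAux_eq (t : ℝ) : hAux t = if t = 0 then 1 else (Real.exp t - 1) / t := by
  unfold hAux
  split_ifs with ht
  · simp [ht]
  · rw [intervalIntegral.integral_eq_sub_of_hasDerivAt
      (f := fun s => Real.exp (s * t) / t) (fun s _ => ?_)
      ((Continuous.intervalIntegrable (by fun_prop) 0 1))]
    · simp only [one_mul, zero_mul, Real.exp_zero]
      ring
    · have h1 : HasDerivAt (fun s : ℝ => s * t) t s := by
        simpa using (hasDerivAt_id s).mul_const t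
      simpa [mul_comm, mul_div_assoc, mul_div_cancel_right₀, ht] using (h1.exp.div_const t)

lemma h1Aux_eq (t : ℝ) :
    h1Aux t = if t = 0 then 1/2 else ((t - 1) * Real.exp t + 1) / t ^ 2 := by
  unfold h1Aux
  split_ifs with ht
  · simp [ht, integral_id]
  · rw [intervalIntegral.integral_eq_sub_of_hasDerivAt
      (f := fun s => (s * t - 1) * Real.exp (s * t) / t ^ 2) (fun s _ => ?_)
      ((Continuous.intervalIntegrable (by fun_prop) 0 1))]
    · field_simp
      simp only [mul_zero, zero_mul, Real.exp_zero]; ring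
    · have h1 : HasDerivAt (fun s : ℝ => s * t) t s := by
        simpa using (hasDerivAt_id s).mul_const t
      have h2 := ((h1.sub_const 1).mul h1.exp).div_const (t ^ 2)
      refine h2.congr_deriv ?_
      field_simp
      ring

lemma h2Aux_eq (t : ℝ) :
    h2Aux t = if t = 0 then 1/3 else ((t ^ 2 - 2*t + 2) * Real.exp t - 2) / t ^ 3 := by
  unfold h2Aux
  split_ifs with ht
  · simp [ht, integral_pow]; norm_num
  · rw [intervalIntegral.integral_eq_sub_of_hasDerivAt
      (f := fun s => (s^2*t^2 - 2*(s*t) + 2) * Real.exp (s * t) / t ^ 3) (fun s _ => ?_)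
      ((Continuous.intervalIntegrable (by fun_prop) 0 1))]
    · field_simp
      simp only [mul_zero, zero_mul, Real.exp_zero]; ring
    · have h1 : HasDerivAt (fun s : ℝ => s * t) t s := by
        simpa using (hasDerivAt_id s).mul_const t
      have hq : HasDerivAt (fun s : ℝ => s^2*t^2 - 2*(s*t) + 2) (2*s*t^2 - 2*t) s := by
        have := (((hasDerivAt_pow 2 s).mul_const (t^2)).sub (h1.const_mul 2)).add_const 2
        exact this.congr_deriv (by norm_num)
      have h2 := (hq.mul h1.exp).div_const (t ^ 3)
      refine h2.congr_deriv ?_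
      field_simp
      ring

lemma exp_sub_one_ne (t : ℝ) (ht : t ≠ 0) : Real.exp t - 1 ≠ 0 := by
  intro h
  exact ht ((Real.exp_eq_one_iff _).mp (by linarith))

lemma hAux_pos (t : ℝ) : 0 < hAux t := by
  rw [hAux_eq]
  split_ifs with ht
  · norm_num
  · rcases lt_or_gt_of_ne ht with h | h
    · have : Real.exp t < 1 := Real.exp_lt_one_iff.mpr h
      exact div_pos_of_neg_of_neg (by linarith) h
    · have : 1 < Real.exp t := Real.one_lt_exp_iff.mpr h
      exact div_pos (by linarith) h

lemma toddMu_eq (t : ℝ) : toddMu t = h1Aux t / hAux t := by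
  unfold toddMu
  rw [hAux_eq, h1Aux_eq]
  split_ifs with ht
  · norm_num
  · have hE := Real.exp_pos t
    have hE1 := exp_sub_one_ne t ht
    have hE2 : 1 - Real.exp (-t) ≠ 0 := by
      intro h
      have : Real.exp (-t) = 1 := by linarith
      exact ht (by simpa using (Real.exp_eq_one_iff _).mp this)
    rw [Real.exp_neg] at *
    field_simp
    ring

lemma hasDerivAt_hAux (t : ℝ) : HasDerivAt hAux (h1Aux t) t := by
  have key := intervalIntegral.hasDerivAt_integral_of_dominated_loc_of_deriv_le
    (F := fun (x : ℝ) (s : ℝ) => Real.exp (s * x))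
    (F' := fun (x : ℝ) (s : ℝ) => s * Real.exp (s * x))
    (a := (0:ℝ)) (b := 1) (x₀ := t)
    (bound := fun _ => Real.exp (|t| + 1)) (μ := volume) (Metric.ball_mem_nhds t one_pos)
    (Filter.Eventually.of_forall fun x =>
      (Continuous.aestronglyMeasurable (by fun_prop)))
    ((Continuous.intervalIntegrable (by fun_prop) 0 1))
    (Continuous.aestronglyMeasurable (by fun_prop))
    (Filter.Eventually.of_forall fun s hs x hx => ?_)
    (intervalIntegrable_const)
    (Filter.Eventually.of_forall fun s hs x hx => ?_)
  · exact key.2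
  · rw [Set.uIoc_of_le (by norm_num : (0:ℝ) ≤ 1)] at hs
    have hs0 : 0 < s := hs.1
    have hs1 : s ≤ 1 := hs.2
    have hx' : |x| ≤ |t| + 1 := by
      have := abs_sub_abs_le_abs_sub x t
      have hd : |x - t| < 1 := by simpa [Real.dist_eq] using (Metric.mem_ball.mp hx)
      linarith
    have : s * x ≤ |t| + 1 := by
      calc s * x ≤ |s * x| := le_abs_self _
      _ = |s| * |x| := abs_mul s x
      _ ≤ 1 * (|t| + 1) := by
          apply mul_le_mul (by rwa [abs_of_pos hs0]) hx' (abs_nonneg _) zero_le_one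
      _ = |t| + 1 := one_mul _
    have hnorm : ‖s * Real.exp (s * x)‖ = s * Real.exp (s * x) := by
      rw [Real.norm_eq_abs, abs_of_nonneg (by positivity)]
    rw [hnorm]
    calc s * Real.exp (s * x) ≤ 1 * Real.exp (s * x) := by
          apply mul_le_mul_of_nonneg_right hs1 (Real.exp_pos _).le
    _ = Real.exp (s * x) := one_mul _
    _ ≤ Real.exp (|t| + 1) := Real.exp_le_exp.mpr this
  · have h1 : HasDerivAt (fun y : ℝ => s * y) s x := by
      simpa using (hasDerivAt_id x).const_mul s
    simpa [mul_comm] using h1.exp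

lemma hasDerivAt_h1Aux (t : ℝ) : HasDerivAt h1Aux (h2Aux t) t := by
  have key := intervalIntegral.hasDerivAt_integral_of_dominated_loc_of_deriv_le
    (F := fun (x : ℝ) (s : ℝ) => s * Real.exp (s * x))
    (F' := fun (x : ℝ) (s : ℝ) => s ^ 2 * Real.exp (s * x))
    (a := (0:ℝ)) (b := 1) (x₀ := t)
    (bound := fun _ => Real.exp (|t| + 1)) (μ := volume) (Metric.ball_mem_nhds t one_pos)
    (Filter.Eventually.of_forall fun x =>
      (Continuous.aestronglyMeasurable (by fun_prop)))
    ((Continuous.intervalIntegrable (by fun_prop) 0 1))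
    (Continuous.aestronglyMeasurable (by fun_prop))
    (Filter.Eventually.of_forall fun s hs x hx => ?_)
    (intervalIntegrable_const)
    (Filter.Eventually.of_forall fun s hs x hx => ?_)
  · exact key.2
  · rw [Set.uIoc_of_le (by norm_num : (0:ℝ) ≤ 1)] at hs
    have hs0 : 0 < s := hs.1
    have hs1 : s ≤ 1 := hs.2
    have hx' : |x| ≤ |t| + 1 := by
      have := abs_sub_abs_le_abs_sub x t
      have hd : |x - t| < 1 := by simpa [Real.dist_eq] using (Metric.mem_ball.mp hx)
      linarith
    have hsx : s * x ≤ |t| + 1 := by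
      calc s * x ≤ |s * x| := le_abs_self _
      _ = |s| * |x| := abs_mul s x
      _ ≤ 1 * (|t| + 1) := by
          apply mul_le_mul (by rwa [abs_of_pos hs0]) hx' (abs_nonneg _) zero_le_one
      _ = |t| + 1 := one_mul _
    have hnorm : ‖s ^ 2 * Real.exp (s * x)‖ = s ^ 2 * Real.exp (s * x) := by
      rw [Real.norm_eq_abs, abs_of_nonneg (by positivity)]
    rw [hnorm]
    calc s ^ 2 * Real.exp (s * x) ≤ 1 * Real.exp (s * x) := by
          apply mul_le_mul_of_nonneg_right _ (Real.exp_pos _).le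
          calc s ^ 2 ≤ 1 ^ 2 := by
                apply pow_le_pow_left₀ hs0.le hs1
          _ = 1 := one_pow 2
    _ = Real.exp (s * x) := one_mul _
    _ ≤ Real.exp (|t| + 1) := Real.exp_le_exp.mpr hsx
  · have h1 : HasDerivAt (fun y : ℝ => s * y) s x := by
      simpa using (hasDerivAt_id x).const_mul s
    have := h1.exp.const_mul s
    exact this.congr_deriv (by ring)

def mAux (t : ℝ) : ℝ := (h2Aux t * hAux t - h1Aux t * h1Aux t) / (hAux t) ^ 2

lemma hasDerivAt_toddMu (t : ℝ) : HasDerivAt toddMu (mAux t) t := by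
  have heq : toddMu = fun t => h1Aux t / hAux t := funext toddMu_eq
  rw [heq]
  exact (hasDerivAt_h1Aux t).div (hasDerivAt_hAux t) (hAux_pos t).ne'

lemma key_ineq (t : ℝ) (ht : t ≠ 0) :
    t ^ 2 + 2 < Real.exp t + Real.exp (-t) := by
  set u := t / 2 with hu
  have hu0 : u ≠ 0 := by simp [hu, ht]
  have h1 : |u| < Real.sinh |u| := Real.self_lt_sinh_iff.mpr (abs_pos.mpr hu0)
  have h2 : u ^ 2 < Real.sinh u ^ 2 := by
    have := pow_lt_pow_left₀ h1 (abs_nonneg u) (by norm_num : 2 ≠ 0)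
    rwa [← Real.abs_sinh, sq_abs, sq_abs] at this
  have hs : Real.sinh u = (Real.exp u - Real.exp (-u)) / 2 := Real.sinh_eq u
  have hprod : Real.exp u * Real.exp (-u) = 1 := by
    rw [← Real.exp_add]; simp
  have het : Real.exp t = Real.exp u * Real.exp u := by
    rw [← Real.exp_add, hu]; ring_nf
  have het' : Real.exp (-t) = Real.exp (-u) * Real.exp (-u) := by
    rw [← Real.exp_add, hu]; ring_nf
  rw [het, het']
  rw [hs] at h2
  have h3 : t ^ 2 = 4 * u ^ 2 := by rw [hu]; ring
  nlinarith [h2, hprod, h3]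

lemma mAux_pos (t : ℝ) : 0 < mAux t := by
  apply div_pos _ (pow_pos (hAux_pos t) 2)
  by_cases ht : t = 0
  · simp [hAux_eq, h1Aux_eq, h2Aux_eq, ht]
    norm_num
  · have hk := key_ineq t ht
    have hE := Real.exp_pos t
    have hE' := Real.exp_pos (-t)
    have hprod : Real.exp t * Real.exp (-t) = 1 := by
      rw [← Real.exp_add]; simp
    have hnum : 0 < Real.exp t ^ 2 - (t ^ 2 + 2) * Real.exp t + 1 := by
      nlinarith [hk, hE]
    have h4 : (0:ℝ) < t ^ 4 := by positivity
    have hval : h2Aux t * hAux t - h1Aux t * h1Aux t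
        = (Real.exp t ^ 2 - (t ^ 2 + 2) * Real.exp t + 1) / t ^ 4 := by
      rw [hAux_eq, h1Aux_eq, h2Aux_eq]
      simp only [ht, if_false]
      field_simp
      ring
    rw [hval]
    positivity

lemma toddMu_strictMono : StrictMono toddMu :=
  strictMono_of_deriv_pos fun t => by
    rw [(hasDerivAt_toddMu t).deriv]; exact mAux_pos t

lemma toddMu_mem (t : ℝ) : toddMu t ∈ Set.Ioo (0:ℝ) 1 := by
  rw [toddMu_eq]
  constructor
  · apply div_pos _ (hAux_pos t)
    rw [h1Aux_eq]
    split_ifs with ht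
    · norm_num
    · apply div_pos _ (by positivity)
      have h1 : -t + 1 < Real.exp (-t) := Real.add_one_lt_exp (neg_ne_zero.mpr ht)
      have hprod : Real.exp t * Real.exp (-t) = 1 := by
        rw [← Real.exp_add]; simp
      nlinarith [Real.exp_pos t]
  · rw [div_lt_one (hAux_pos t)]
    have hdiff : 0 < hAux t - h1Aux t := by
      rw [hAux_eq, h1Aux_eq]
      split_ifs with ht
      · norm_num
      · have h1 : t + 1 < Real.exp t := Real.add_one_lt_exp ht
        have hval : (Real.exp t - 1) / t - ((t - 1) * Real.exp t + 1) / t ^ 2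
            = (Real.exp t - t - 1) / t ^ 2 := by
          field_simp
          ring
        rw [hval]
        apply div_pos (by linarith) (by positivity)
    linarith

lemma rho_eq (tau : ℝ → ℝ) (z y : ℝ) :
    rhoFun tau z y = Real.exp (z * tau y) / hAux (tau y) := by
  unfold rhoFun
  rw [hAux_eq]
  split_ifs with ht
  · simp [ht]
  · rw [div_div_eq_mul_div]

/-- With `τ : (0,1) → ℝ` the inverse of `μ`, the density `ρ(·,x)` is a
probability density on `[0,1]` with barycenter `x`, and `∂_x log ρ(z,x) = τ'(x)(z−x)`. -/
theorem rhoFun_properties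
    (tau : ℝ → ℝ)
    (htau₁ : ∀ t : ℝ, tau (toddMu t) = t)
    (htau₂ : ∀ x ∈ Set.Ioo (0:ℝ) 1, toddMu (tau x) = x) :
    ∀ x ∈ Set.Ioo (0:ℝ) 1,
      (∫ z in (0:ℝ)..1, rhoFun tau z x) = 1 ∧
      (∫ z in (0:ℝ)..1, z * rhoFun tau z x) = x ∧
      (∀ z ∈ Set.Icc (0:ℝ) 1,
        deriv (fun y => Real.log (rhoFun tau z y)) x = deriv tau x * (z - x)) := by
  intro x hx
  set t := tau x with htdef
  have hxt : toddMu t = x := htau₂ x hx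
  have hcont : ContinuousAt tau x := by
    rw [ContinuousAt, Metric.tendsto_nhds]
    intro ε hε
    have hmem : Set.Ioo (toddMu (t - ε)) (toddMu (t + ε)) ∈ nhds x := by
      apply Ioo_mem_nhds
      · rw [← hxt]; exact toddMu_strictMono (by linarith)
      · rw [← hxt]; exact toddMu_strictMono (by linarith)
    filter_upwards [hmem] with y hy
    have h0 : (0:ℝ) < y := lt_trans (toddMu_mem (t - ε)).1 hy.1
    have h1 : y < 1 := lt_trans hy.2 (toddMu_mem (t + ε)).2
    have hyt : toddMu (tau y) = y := htau₂ y ⟨h0, h1⟩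
    have l1 : t - ε < tau y := by
      have h := hy.1; rw [← hyt] at h
      exact (toddMu_strictMono.lt_iff_lt).mp h
    have l2 : tau y < t + ε := by
      have h := hy.2; rw [← hyt] at h
      exact (toddMu_strictMono.lt_iff_lt).mp h
    rw [Real.dist_eq, abs_lt]
    exact ⟨by linarith, by linarith⟩
  have hfg : ∀ᶠ y in nhds x, toddMu (tau y) = y := by
    filter_upwards [isOpen_Ioo.mem_nhds hx] with y hy using htau₂ y hy
  have hder : HasDerivAt tau (mAux t)⁻¹ x :=
    (hasDerivAt_toddMu t).of_local_left_inverse hcont (mAux_pos t).ne' hfg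
  refine ⟨?_, ?_, ?_⟩
  · have heq : (∫ z in (0:ℝ)..1, rhoFun tau z x)
        = (∫ z in (0:ℝ)..1, Real.exp (z * t)) / hAux t := by
      simp only [rho_eq, ← htdef]
      rw [intervalIntegral.integral_div]
    rw [heq, show (∫ z in (0:ℝ)..1, Real.exp (z * t)) = hAux t from rfl]
    exact div_self (hAux_pos t).ne'
  · have heq : (∫ z in (0:ℝ)..1, z * rhoFun tau z x)
        = (∫ z in (0:ℝ)..1, z * Real.exp (z * t)) / hAux t := by
      simp only [rho_eq, ← htdef, ← mul_div_assoc]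
      rw [intervalIntegral.integral_div]
    rw [heq, show (∫ z in (0:ℝ)..1, z * Real.exp (z * t)) = h1Aux t from rfl,
      ← toddMu_eq, hxt]
  · intro z hz
    have hlog : ∀ y, Real.log (rhoFun tau z y)
        = z * tau y - Real.log (hAux (tau y)) := fun y => by
      rw [rho_eq, Real.log_div (Real.exp_ne_zero _) (hAux_pos _).ne', Real.log_exp]
    have hd1 : HasDerivAt (fun y => hAux (tau y)) (h1Aux t * (mAux t)⁻¹) x :=
      (hasDerivAt_hAux t).comp x hder
    have hd2 : HasDerivAt (fun y => Real.log (hAux (tau y)))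
        (h1Aux t * (mAux t)⁻¹ / hAux t) x := hd1.log (hAux_pos t).ne'
    have hd3 : HasDerivAt (fun y => z * tau y - Real.log (hAux (tau y)))
        (z * (mAux t)⁻¹ - h1Aux t * (mAux t)⁻¹ / hAux t) x :=
      (hder.const_mul z).sub hd2
    have hdd : deriv (fun y => Real.log (rhoFun tau z y)) x
        = z * (mAux t)⁻¹ - h1Aux t * (mAux t)⁻¹ / hAux t := by
      simp only [hlog]
      exact hd3.deriv
    rw [hdd, hder.deriv]
    have hh : h1Aux t = x * hAux t := by
      have hx1 : h1Aux t / hAux t = x := by rw [← toddMu_eq, hxt]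
      rw [← hx1, div_mul_cancel₀ _ (hAux_pos t).ne']
    rw [hh, mul_comm x (hAux t), mul_assoc, mul_div_assoc,
      mul_comm (hAux t), div_mul_cancel₀ _ (hAux_pos t).ne']
    ring


end
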